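/- Let E be a real inner product space, let Ω ⊆ E be a nonempty open convex set, and let F : E → E be continuous on Ω and (Fréchet) differentiable at every point of Ω. Let L = {u + λv : λ ∈ ℝ} ⊆ E be a straight line (u ∈ E, v ∈ E \ {0}) that is not orthogonal to Ω. Then the following are equivalent: (a) for every ω ∈ L, the translated map x ↦ F(x) + ω is quasimonotone on Ω; (b) for every x ∈ Ω, the derivative DF(x) is positive semidefinite, i.e. ⟨w, (DF(x))(w)⟩ ≥ 0 for all w ∈ E. -/

import Mathlib

open Filter Topology


open scoped RealInnerProductSpace

private lemma key_psd {E : Type*} [NormedAddCommGroup E] [InnerProductSpace ℝ E]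
    (Ω : Set E) (hΩopen : IsOpen Ω)
    (F : E → E) (f : E → E →L[ℝ] E) (hdiff : ∀ x ∈ Ω, HasFDerivAt F (f x) x)
    (u v : E)
    (hqm : ∀ ω : E, (∃ l : ℝ, ω = u + l • v) →
        ∀ x ∈ Ω, ∀ y ∈ Ω, ⟪F y + ω, x - y⟫ > 0 → ⟪F x + ω, x - y⟫ ≥ 0)
    (x₀ : E) (hx₀ : x₀ ∈ Ω) (w : E) (hvw : ⟪v, w⟫ ≠ 0) :
    0 ≤ ⟪w, f x₀ w⟫ := by
  by_contra hneg
  push_neg at hneg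
  set d : ℝ := ⟪w, f x₀ w⟫ with hd
  have hγp : HasDerivAt (fun t : ℝ => x₀ + t • w) w 0 := by
    simpa using ((hasDerivAt_id (0:ℝ)).smul_const w).const_add x₀
  have hγm : HasDerivAt (fun t : ℝ => x₀ - t • w) (-w) 0 := by
    simpa [sub_eq_add_neg] using ((hasDerivAt_id (0:ℝ)).smul_const w).neg.const_add x₀
  have hFp : HasDerivAt (fun t : ℝ => F (x₀ + t • w)) (f x₀ w) 0 := by
    have h1 : HasFDerivAt F (f x₀) (x₀ + (0:ℝ) • w) := by simpa using hdiff x₀ hx₀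
    simpa [Function.comp_def] using h1.comp_hasDerivAt 0 hγp
  have hFm : HasDerivAt (fun t : ℝ => F (x₀ - t • w)) (-(f x₀ w)) 0 := by
    have h1 : HasFDerivAt F (f x₀) (x₀ - (0:ℝ) • w) := by simpa using hdiff x₀ hx₀
    simpa [Function.comp_def] using h1.comp_hasDerivAt 0 hγm
  set h : ℝ → ℝ := fun t => ⟪F (x₀ + t • w) - F (x₀ - t • w), w⟫ with hhdef
  have hh : HasDerivAt h (2 * d) 0 := by
    have := HasDerivAt.inner ℝ (hFp.sub hFm) (hasDerivAt_const (0:ℝ) w)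
    have h2 : ⟪F (x₀ + (0:ℝ) • w) - F (x₀ - (0:ℝ) • w), (0:E)⟫
        + ⟪f x₀ w - -(f x₀ w), w⟫ = 2 * d := by
      rw [inner_zero_right, sub_neg_eq_add, inner_add_left, real_inner_comm]
      ring
    simp only [Pi.sub_apply] at this
    rwa [h2] at this
  have h0 : h 0 = 0 := by simp [hhdef]
  have hslope : Tendsto (slope h 0) (𝓝[≠] 0) (𝓝 (2 * d)) :=
    hasDerivAt_iff_tendsto_slope.mp hh
  have hslope' : ∀ᶠ t in 𝓝[>] (0:ℝ), slope h 0 t < 0 := by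
    have h2d : 2 * d < 0 := by nlinarith
    have : ∀ᶠ t in 𝓝[≠] (0:ℝ), slope h 0 t < 0 :=
      hslope.eventually (eventually_lt_nhds h2d)
    exact this.filter_mono (nhdsWithin_mono _ fun t ht => ne_of_gt ht)
  have hmemp : ∀ᶠ t in 𝓝[>] (0:ℝ), x₀ + t • w ∈ Ω := by
    have : Tendsto (fun t : ℝ => x₀ + t • w) (𝓝 0) (𝓝 x₀) := by
      simpa using hγp.continuousAt.tendsto
    exact (this.eventually (hΩopen.mem_nhds hx₀)).filter_mono nhdsWithin_le_nhds
  have hmemm : ∀ᶠ t in 𝓝[>] (0:ℝ), x₀ - t • w ∈ Ω := by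
    have : Tendsto (fun t : ℝ => x₀ - t • w) (𝓝 0) (𝓝 x₀) := by
      simpa using hγm.continuousAt.tendsto
    exact (this.eventually (hΩopen.mem_nhds hx₀)).filter_mono nhdsWithin_le_nhds
  obtain ⟨t, ⟨⟨hs, hp⟩, hm⟩, htpos⟩ :=
    (((hslope'.and hmemp).and hmemm).and eventually_mem_nhdsWithin).exists
  rw [Set.mem_Ioi] at htpos
  have hht : h t < 0 := by
    have hs' : h t / t < 0 := by
      have : slope h 0 t = h t / t := by simp [slope, h0, div_eq_inv_mul]
      rwa [this] at hs
    have := mul_neg_of_neg_of_pos hs' htpos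
    rwa [div_mul_cancel₀ _ (ne_of_gt htpos)] at this
  -- set up the contradiction with quasimonotonicity
  set x : E := x₀ + t • w with hxdef
  set y : E := x₀ - t • w with hydef
  have hxy : x - y = (2 * t) • w := by
    rw [hxdef, hydef]; module
  set A : ℝ := ⟪F x, w⟫ with hA
  set B : ℝ := ⟪F y, w⟫ with hB
  have hAB : A - B < 0 := by
    have : h t = A - B := by rw [hhdef]; simp [hA, hB, inner_sub_left]; rfl
    linarith [this ▸ hht]
  set l : ℝ := ((-(A + B) / 2) - ⟪u, w⟫) / ⟪v, w⟫ with hl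
  set ω : E := u + l • v with hω
  have hωw : ⟪ω, w⟫ = -(A + B) / 2 := by
    rw [hω, inner_add_left, real_inner_smul_left, hl, div_mul_cancel₀ _ hvw]
    ring
  have hpos : ⟪F y + ω, x - y⟫ > 0 := by
    rw [hxy, real_inner_smul_right, inner_add_left, hωw]
    nlinarith
  have hge := hqm ω ⟨l, rfl⟩ x hp y hm hpos
  rw [hxy, real_inner_smul_right, inner_add_left, hωw] at hge
  nlinarith

private lemma mono_of_psd {E : Type*} [NormedAddCommGroup E] [InnerProductSpace ℝ E]
    (Ω : Set E) (hΩconv : Convex ℝ Ω)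
    (F : E → E) (f : E → E →L[ℝ] E) (hdiff : ∀ x ∈ Ω, HasFDerivAt F (f x) x)
    (hpsd : ∀ x ∈ Ω, ∀ w : E, ⟪w, f x w⟫ ≥ 0)
    (x : E) (hx : x ∈ Ω) (y : E) (hy : y ∈ Ω) :
    ⟪F y, x - y⟫ ≤ ⟪F x, x - y⟫ := by
  set g : ℝ → ℝ := fun s => ⟪F (y + s • (x - y)), x - y⟫ with hgdef
  have hz : ∀ s ∈ Set.Icc (0:ℝ) 1, y + s • (x - y) ∈ Ω := by
    intro s hs
    have : y + s • (x - y) = (1 - s) • y + s • x := by module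
    rw [this]
    exact hΩconv hy hx (by linarith [hs.2]) hs.1 (by ring)
  have hg : ∀ s ∈ Set.Icc (0:ℝ) 1,
      HasDerivAt g ⟪f (y + s • (x - y)) (x - y), x - y⟫ s := by
    intro s hs
    have hγ : HasDerivAt (fun s' : ℝ => y + s' • (x - y)) (x - y) s := by
      simpa using ((hasDerivAt_id s).smul_const (x - y)).const_add y
    have hF : HasDerivAt (fun s' : ℝ => F (y + s' • (x - y)))
        (f (y + s • (x - y)) (x - y)) s :=
      (hdiff _ (hz s hs)).comp_hasDerivAt s hγ
    have := HasDerivAt.inner ℝ hF (hasDerivAt_const s (x - y))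
    simpa using this
  have hmono : MonotoneOn g (Set.Icc 0 1) := by
    apply monotoneOn_of_deriv_nonneg (convex_Icc 0 1)
    · exact fun s hs => (hg s hs).continuousAt.continuousWithinAt
    · intro s hs
      rw [interior_Icc] at hs
      exact ((hg s ⟨hs.1.le, hs.2.le⟩).differentiableAt).differentiableWithinAt
    · intro s hs
      rw [interior_Icc] at hs
      rw [(hg s ⟨hs.1.le, hs.2.le⟩).deriv]
      have := hpsd _ (hz s ⟨hs.1.le, hs.2.le⟩) (x - y)
      rwa [real_inner_comm] at this
  have := hmono (Set.left_mem_Icc.mpr one_pos.le) (Set.right_mem_Icc.mpr one_pos.le)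
    one_pos.le
  simpa [hgdef] using this

/-- Let `Ω` be a nonempty open convex subset of a real inner product
space `E`, let `F : E → E` be continuous on `Ω` and Fréchet differentiable at every
point of `Ω` (with derivative `f x = DF(x)`), and let `L = {u + λ•v}` (with `v ≠ 0`)
be a straight line not orthogonal to `Ω`. Then `F + ω` is quasimonotone on `Ω` for
every `ω ∈ L` if and only if `DF(x)` is positive semidefinite for every `x ∈ Ω`. -/
theorem quasimonotone_translations_iff_fderiv_posSemidef
    {E : Type*} [NormedAddCommGroup E] [InnerProductSpace ℝ E]
    (Ω : Set E) (hΩne : Ω.Nonempty) (hΩopen : IsOpen Ω) (hΩconv : Convex ℝ Ω)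
    (F : E → E) (hFcont : ContinuousOn F Ω)
    (f : E → E →L[ℝ] E) (hdiff : ∀ x ∈ Ω, HasFDerivAt F (f x) x)
    (u v : E) (hv : v ≠ 0)
    (hnotorth : ∃ a ∈ Ω, ∃ b ∈ Ω, ⟪v, a⟫ ≠ ⟪v, b⟫) :
    (∀ ω : E, (∃ l : ℝ, ω = u + l • v) →
        ∀ x ∈ Ω, ∀ y ∈ Ω, ⟪F y + ω, x - y⟫ > 0 → ⟪F x + ω, x - y⟫ ≥ 0)
      ↔ (∀ x ∈ Ω, ∀ w : E, ⟪w, f x w⟫ ≥ 0) := by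
  constructor
  · intro hqm x hx w
    by_cases hvw : ⟪v, w⟫ = 0
    · -- limit argument along w + t • v
      have hφ : Continuous fun t : ℝ => w + t • v :=
        continuous_const.add (continuous_id.smul continuous_const)
      have hcont : Continuous fun t : ℝ => ⟪w + t • v, f x (w + t • v)⟫ :=
        hφ.inner ((f x).continuous.comp hφ)
      have hev : ∀ᶠ t in 𝓝[≠] (0:ℝ), 0 ≤ ⟪w + t • v, f x (w + t • v)⟫ := by
        filter_upwards [eventually_mem_nhdsWithin] with t ht
        apply key_psd Ω hΩopen F f hdiff u v hqm x hx
        rw [inner_add_right, real_inner_smul_right, hvw, zero_add,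
          real_inner_self_eq_norm_sq]
        have hvnorm : (0:ℝ) < ‖v‖ ^ 2 := pow_pos (norm_pos_iff.mpr hv) 2
        exact mul_ne_zero ht (ne_of_gt hvnorm)
      have htend : Filter.Tendsto (fun t : ℝ => ⟪w + t • v, f x (w + t • v)⟫)
          (𝓝[≠] (0:ℝ)) (𝓝 ⟪w + (0:ℝ) • v, f x (w + (0:ℝ) • v)⟫) :=
        (hcont.tendsto 0).mono_left nhdsWithin_le_nhds
      have := ge_of_tendsto htend hev
      simpa using this
    · exact key_psd Ω hΩopen F f hdiff u v hqm x hx w hvw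
  · rintro hpsd ω ⟨l, rfl⟩ x hx y hy hlt
    have hmono := mono_of_psd Ω hΩconv F f hdiff hpsd x hx y hy
    rw [inner_add_left] at hlt ⊢
    linarith
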